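/- Let d ≥ 1 and let R(z) = √(2π) e^{−z} z^{z+1/2}/Γ(z+1) for z > 0. Define, for b > 0 and s ∈ Int(S_d), A_b(s) = [b^{(d+1)/2}(1/b + d)^{d+1/2}/((4π)^{d/2}√((1−‖s‖₁)s_1⋯s_d))] · ((2/b + 2d)/(2/b + d))^{2/b + d + 1/2} · e^{−d} · [R²((1−‖s‖₁)/b) ∏_{i=1}^d R²(s_i/b)] / [R(2(1−‖s‖₁)/b) ∏_{i=1}^d R(2 s_i/b)] · R(2/b + d)/R²(1/b + d). Then there exists a constant c > 0 depending only on d such that for all b ∈ (0,1) and all s ∈ S_d(b) = {s ∈ S_d : 1 − ‖s‖₁ ≥ b and min(s_1,…,s_d) ≥ b}, one has A_b(s) ≥ c · b^{−d/2}/√((1 − ‖s‖₁) s_1 ⋯ s_d). -/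

import Mathlib

open MeasureTheory Filter Topology
open scoped ENNReal BigOperators

noncomputable section

/-- The d-dimensional simplex `S_d = {s ∈ [0,1]^d : s_1 + ⋯ + s_d ≤ 1}`. -/
def Sd (d : ℕ) : Set (Fin d → ℝ) :=
  {s | (∀ i, 0 ≤ s i ∧ s i ≤ 1) ∧ ∑ i, s i ≤ 1}

/-- The Dirichlet density `K_{u,v}` on `S_d` (0 outside). -/
def dirK (d : ℕ) (u : Fin d → ℝ) (v : ℝ) : (Fin d → ℝ) → ℝ :=
  Set.indicator (Sd d)
    (fun s => Real.Gamma (v + ∑ i, u i) / (Real.Gamma v * ∏ i, Real.Gamma (u i)) *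
      (1 - ∑ i, s i) ^ (v - 1) * ∏ i, (s i) ^ (u i - 1))

/-- The Dirichlet kernel `K_{s/b+1, (1-‖s‖₁)/b+1}` at location `s` with bandwidth `b`. -/
def dirKb (d : ℕ) (b : ℝ) (s : Fin d → ℝ) : (Fin d → ℝ) → ℝ :=
  dirK d (fun i => s i / b + 1) ((1 - ∑ i, s i) / b + 1)

/-- The Dirichlet kernel density estimator based on the sample `X`. -/
def fhat (d n : ℕ) (b : ℝ) (X : Fin n → Fin d → ℝ) (s : Fin d → ℝ) : ℝ :=
  (n : ℝ)⁻¹ * ∑ i, dirKb d b s (X i)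

/-- `m` = the largest integer strictly less than `β` (for `β > 0`). -/
def mOf (β : ℝ) : ℕ := ⌈β⌉₊ - 1

/-- Partial derivative of order `j` in the directions `v` (on the interior of the simplex). -/
def Dpartial (d j : ℕ) (f : (Fin d → ℝ) → ℝ) (v : Fin j → Fin d) (s : Fin d → ℝ) : ℝ :=
  iteratedFDerivWithin ℝ j f (interior (Sd d)) s fun i => Pi.single (v i) 1

/-- The Hölder class `Σ(d, β, L)` of probability densities supported on `S_d`. -/
def holderClass (d : ℕ) (β L : ℝ) : Set ((Fin d → ℝ) → ℝ) :=
  {f | (∀ s, 0 ≤ f s) ∧ (∀ s, s ∉ Sd d → f s = 0) ∧ (∫ s in Sd d, f s) = 1 ∧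
    ContDiffOn ℝ (mOf β) f (interior (Sd d)) ∧
    ∀ v : Fin (mOf β) → Fin d, ∀ s ∈ interior (Sd d), ∀ t ∈ interior (Sd d),
      |Dpartial d (mOf β) f v s - Dpartial d (mOf β) f v t| ≤
        L * (∑ i, |s i - t i|) ^ (β - (mOf β : ℝ))}

/-- `E_f ‖f̂_{n,b} − f‖_p^p`: expectation, under i.i.d. sampling of `X_1, …, X_n` from the
density `f`, of the `p`-th power of the `L^p` distance between `f̂_{n,b}` and `f` on `S_d`. -/
def lpRiskPow (d n : ℕ) (b p : ℝ) (f : (Fin d → ℝ) → ℝ) : ℝ :=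
  ∫ ω : Fin n → Fin d → ℝ,
    (∏ i, f (ω i)) * ∫ s in Sd d, |fhat d n b ω s - f s| ^ p

/-- `R(z) = √(2π) e^{-z} z^{z+1/2} / Γ(z+1)`. -/
def Rfun (z : ℝ) : ℝ :=
  Real.sqrt (2 * Real.pi) * Real.exp (-z) * z ^ (z + 1 / 2) / Real.Gamma (z + 1)

/-- The region `S_d(b)` of the simplex at distance at least `b` from the boundary faces. -/
def SdB (d : ℕ) (b : ℝ) : Set (Fin d → ℝ) :=
  {s ∈ Sd d | b ≤ 1 - ∑ i, s i ∧ ∀ i, b ≤ s i}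

/-- The leading variance factor `A_b(s)` of Ouimet and Tolosana-Delgado (2022). -/
def varAb (d : ℕ) (b : ℝ) (s : Fin d → ℝ) : ℝ :=
  b ^ (((d : ℝ) + 1) / 2) * (1 / b + (d : ℝ)) ^ ((d : ℝ) + 1 / 2) /
      ((4 * Real.pi) ^ ((d : ℝ) / 2) * Real.sqrt ((1 - ∑ i, s i) * ∏ i, s i)) *
    ((2 / b + 2 * (d : ℝ)) / (2 / b + (d : ℝ))) ^ (2 / b + (d : ℝ) + 1 / 2) *
    Real.exp (-(d : ℝ)) *
    (Rfun ((1 - ∑ i, s i) / b) ^ 2 * (∏ i, Rfun (s i / b) ^ 2) /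
      (Rfun (2 * (1 - ∑ i, s i) / b) * ∏ i, Rfun (2 * s i / b))) *
    (Rfun (2 / b + (d : ℝ)) / Rfun (1 / b + (d : ℝ)) ^ 2)

lemma Rfun_pos {z : ℝ} (hz : 0 < z) : 0 < Rfun z := by
  have h1 : 0 < Real.Gamma (z + 1) := Real.Gamma_pos_of_pos (by linarith)
  have h2 : 0 < Real.sqrt (2 * Real.pi) := Real.sqrt_pos.mpr (by positivity)
  have h3 : (0:ℝ) < z ^ (z + 1/2) := Real.rpow_pos_of_pos hz _
  unfold Rfun; positivity

lemma Rfun_nat (n : ℕ) (hn : 1 ≤ n) : Rfun n = Real.sqrt Real.pi / Stirling.stirlingSeq n := by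
  have hn0 : (0:ℝ) < n := by exact_mod_cast hn
  have hfac : Real.Gamma ((n:ℝ) + 1) = (Nat.factorial n : ℝ) := Real.Gamma_nat_eq_factorial n
  have hpow : (n:ℝ) ^ ((n:ℝ) + 1/2) = (n:ℝ) ^ (n:ℕ) * Real.sqrt n := by
    rw [Real.rpow_add hn0, Real.rpow_natCast, Real.sqrt_eq_rpow]
  have hexp : ((n:ℝ) / Real.exp 1) ^ (n:ℕ) = (n:ℝ)^(n:ℕ) * Real.exp (-(n:ℝ)) := by
    rw [div_pow, Real.exp_one_pow, Real.exp_neg, div_eq_mul_inv]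
  have hsqrt : Real.sqrt (2 * Real.pi) * Real.sqrt n = Real.sqrt Real.pi * Real.sqrt (2*n) := by
    rw [← Real.sqrt_mul (by positivity), ← Real.sqrt_mul (by positivity)]
    ring_nf
  have hfacpos : (0:ℝ) < (Nat.factorial n : ℝ) := by exact_mod_cast Nat.factorial_pos n
  unfold Rfun Stirling.stirlingSeq
  rw [hfac, hpow, hexp]
  have hs2 : (0:ℝ) < Real.sqrt (2*n) := Real.sqrt_pos.mpr (by positivity)
  have hnn : (0:ℝ) < (n:ℝ)^(n:ℕ) := by positivity
  field_simp
  nlinarith [hsqrt, Real.exp_pos (-(n:ℝ)), hnn.le, mul_pos hs2 hnn]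

lemma stirling_lb (n : ℕ) : Real.sqrt Real.pi ≤ Stirling.stirlingSeq (n + 1) := by
  have h := Stirling.stirlingSeq'_antitone.le_of_tendsto
    (Stirling.tendsto_stirlingSeq_sqrt_pi.comp (Filter.tendsto_add_atTop_nat 1)) n
  simpa using h

lemma stirling_ub (n : ℕ) : Stirling.stirlingSeq (n + 1) ≤ Real.exp 1 / Real.sqrt 2 := by
  have h := Stirling.stirlingSeq'_antitone (Nat.zero_le n)
  simpa [Stirling.stirlingSeq_one] using h

lemma Rfun_nat_le (n : ℕ) (hn : 1 ≤ n) : Rfun n ≤ 1 := by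
  obtain ⟨m, rfl⟩ := Nat.exists_eq_add_of_le hn
  rw [Rfun_nat _ (by omega)]
  rw [div_le_one (lt_of_lt_of_le (Real.sqrt_pos.mpr Real.pi_pos) (by simpa [Nat.add_comm] using stirling_lb m))]
  simpa [Nat.add_comm] using stirling_lb m

lemma Rfun_nat_ge (n : ℕ) (hn : 1 ≤ n) :
    Real.sqrt (2 * Real.pi) / Real.exp 1 ≤ Rfun n := by
  obtain ⟨m, rfl⟩ := Nat.exists_eq_add_of_le hn
  rw [Rfun_nat _ (by omega)]
  have h1 : Stirling.stirlingSeq (1 + m) ≤ Real.exp 1 / Real.sqrt 2 := by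
    simpa [Nat.add_comm] using stirling_ub m
  have h2 : 0 < Stirling.stirlingSeq (1 + m) := by
    have := stirling_lb m
    have := Real.sqrt_pos.mpr Real.pi_pos
    simpa [Nat.add_comm] using lt_of_lt_of_le this (stirling_lb m)
  have h3 : (0:ℝ) < Real.exp 1 / Real.sqrt 2 := by positivity
  have key : Real.sqrt Real.pi / (Real.exp 1 / Real.sqrt 2) ≤
      Real.sqrt Real.pi / Stirling.stirlingSeq (1 + m) :=
    div_le_div_of_nonneg_left (Real.sqrt_nonneg _) h2 h1
  refine le_trans (le_of_eq ?_) key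
  rw [Real.sqrt_mul (by norm_num), div_div_eq_mul_div]
  ring

lemma Gamma_interp {x y a b : ℝ} (hx : 0 < x) (hy : 0 < y) (ha : 0 ≤ a) (hb : 0 ≤ b)
    (hab : a + b = 1) :
    Real.Gamma (a * x + b * y) ≤ Real.Gamma x ^ a * Real.Gamma y ^ b := by
  rcases ha.eq_or_lt with ha0 | ha'
  · have hb1 : b = 1 := by linarith
    subst hb1; rw [← ha0]; simp [Real.rpow_one]
  rcases hb.eq_or_lt with hb0 | hb'
  · have ha1 : a = 1 := by linarith
    subst ha1; rw [← hb0]; simp [Real.rpow_one]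
  exact Real.Gamma_mul_add_mul_le_rpow_Gamma_mul_rpow_Gamma hx hy ha' hb' hab

lemma Rfun_ge {z : ℝ} (hz : 1 ≤ z) :
    Real.sqrt (2 * Real.pi) / (2 * Real.exp 1 ^ 2) ≤ Rfun z := by
  set n : ℕ := ⌊z⌋₊ with hn
  have hn1 : 1 ≤ n := Nat.le_floor (by exact_mod_cast hz)
  have hn0 : (0:ℝ) < n := by exact_mod_cast hn1
  have hnz : (n:ℝ) ≤ z := Nat.floor_le (by linarith)
  have hzn : z < (n:ℝ) + 1 := Nat.lt_floor_add_one z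
  set t : ℝ := z - n with htdef
  have ht0 : 0 ≤ t := by simp [htdef]; linarith
  have ht1 : t < 1 := by simp [htdef]; linarith
  have hfacpos : (0:ℝ) < (Nat.factorial n : ℝ) := by exact_mod_cast Nat.factorial_pos n
  -- Gamma upper bound
  have hG : Real.Gamma (z + 1) ≤ (Nat.factorial n : ℝ) * ((n:ℝ) + 1) ^ t := by
    have h := Gamma_interp (x := (n:ℝ)+1) (y := (n:ℝ)+2) (by linarith) (by linarith)
      (by linarith : (0:ℝ) ≤ 1 - t) ht0 (by ring)
    have harg : (1-t) * ((n:ℝ)+1) + t * ((n:ℝ)+2) = z + 1 := by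
      simp only [htdef]; ring
    rw [harg] at h
    have e1 : Real.Gamma ((n:ℝ)+1) = (Nat.factorial n : ℝ) := Real.Gamma_nat_eq_factorial n
    have e2 : Real.Gamma ((n:ℝ)+2) = (Nat.factorial (n+1) : ℝ) := by
      have := Real.Gamma_nat_eq_factorial (n+1)
      push_cast at this ⊢
      rw [← this]; ring_nf
    rw [e1, e2] at h
    refine h.trans (le_of_eq ?_)
    have e3 : (Nat.factorial (n+1) : ℝ) = ((n:ℝ)+1) * (Nat.factorial n : ℝ) := by
      push_cast [Nat.factorial_succ]; ring
    rw [e3, Real.mul_rpow (by positivity) (by positivity), ← mul_assoc,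
      mul_comm (((Nat.factorial n : ℝ)) ^ (1-t)) (((n:ℝ)+1)^t), mul_assoc,
      ← Real.rpow_add hfacpos]
    norm_num [mul_comm]
  -- numerator lower bound
  have hnum : Real.sqrt (2*Real.pi) * Real.exp (-(n:ℝ)) * (n:ℝ) ^ ((n:ℝ) + 1/2) *
      (Real.exp (-t) * (n:ℝ) ^ t) ≤
      Real.sqrt (2*Real.pi) * Real.exp (-z) * z ^ (z + 1/2) := by
    have h1 : (n:ℝ) ^ (z + 1/2) ≤ z ^ (z + 1/2) :=
      Real.rpow_le_rpow hn0.le hnz (by linarith)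
    have h2 : (n:ℝ) ^ (z + 1/2) = (n:ℝ) ^ ((n:ℝ) + 1/2) * (n:ℝ) ^ t := by
      rw [← Real.rpow_add hn0]; congr 1; simp [htdef]; ring
    have h3 : Real.exp (-z) = Real.exp (-(n:ℝ)) * Real.exp (-t) := by
      rw [← Real.exp_add]; congr 1; simp [htdef]; ring
    calc Real.sqrt (2*Real.pi) * Real.exp (-(n:ℝ)) * (n:ℝ)^((n:ℝ)+1/2) * (Real.exp (-t) * (n:ℝ)^t)
        = Real.sqrt (2*Real.pi) * (Real.exp (-(n:ℝ)) * Real.exp (-t)) * ((n:ℝ)^((n:ℝ)+1/2) * (n:ℝ)^t) := by ring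
      _ = Real.sqrt (2*Real.pi) * Real.exp (-z) * (n:ℝ)^(z+1/2) := by rw [← h3, ← h2]
      _ ≤ Real.sqrt (2*Real.pi) * Real.exp (-z) * z^(z+1/2) := by
          apply mul_le_mul_of_nonneg_left h1; positivity
  -- combine
  have key : Rfun (n:ℝ) * (Real.exp (-t) * ((n:ℝ)/((n:ℝ)+1)) ^ t) ≤ Rfun z := by
    have hΓpos : 0 < Real.Gamma (z+1) := Real.Gamma_pos_of_pos (by linarith)
    have expand : Rfun (n:ℝ) * (Real.exp (-t) * ((n:ℝ)/((n:ℝ)+1)) ^ t) =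
        (Real.sqrt (2*Real.pi) * Real.exp (-(n:ℝ)) * (n:ℝ) ^ ((n:ℝ)+1/2) *
          (Real.exp (-t) * (n:ℝ) ^ t)) / ((Nat.factorial n : ℝ) * ((n:ℝ)+1) ^ t) := by
      unfold Rfun
      rw [Real.Gamma_nat_eq_factorial n, Real.div_rpow hn0.le (by positivity)]
      field_simp
    rw [expand]
    unfold Rfun
    exact div_le_div₀ (by positivity) hnum (by positivity) hG
  refine le_trans ?_ key
  have hR : Real.sqrt (2*Real.pi) / Real.exp 1 ≤ Rfun (n:ℝ) := Rfun_nat_ge n hn1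
  have hE : Real.exp (-1 : ℝ) ≤ Real.exp (-t) := Real.exp_le_exp.mpr (by linarith)
  have hP : (1/2 : ℝ) ≤ ((n:ℝ)/((n:ℝ)+1)) ^ t := by
    have hb : (1/2 : ℝ) ≤ (n:ℝ)/((n:ℝ)+1) := by
      rw [le_div_iff₀ (by linarith)]
      have : (1:ℝ) ≤ (n:ℝ) := by exact_mod_cast hn1
      linarith
    calc (1/2 : ℝ) = (1/2 : ℝ) ^ (1:ℝ) := by rw [Real.rpow_one]
      _ ≤ (1/2 : ℝ) ^ t := Real.rpow_le_rpow_of_exponent_ge (by norm_num) (by norm_num) ht1.le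
      _ ≤ ((n:ℝ)/((n:ℝ)+1)) ^ t := Real.rpow_le_rpow (by norm_num) hb ht0
  have step : Real.sqrt (2*Real.pi) / Real.exp 1 * (Real.exp (-1:ℝ) * (1/2)) ≤
      Rfun (n:ℝ) * (Real.exp (-t) * ((n:ℝ)/((n:ℝ)+1)) ^ t) := by
    apply mul_le_mul hR _ (by positivity) ((Rfun_pos hn0).le)
    apply mul_le_mul hE hP (by norm_num) (Real.exp_pos _).le
  refine le_trans (le_of_eq ?_) step
  rw [Real.exp_neg]
  have h9 := Real.exp_ne_zero 1
  field_simp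

lemma Rfun_le {z : ℝ} (hz : 1 ≤ z) : Rfun z ≤ 2 * Real.exp 1 := by
  set n : ℕ := ⌊z⌋₊ with hn
  have hn1 : 1 ≤ n := Nat.le_floor (by exact_mod_cast hz)
  have hn0 : (0:ℝ) < n := by exact_mod_cast hn1
  have hnr : (1:ℝ) ≤ n := by exact_mod_cast hn1
  have hnz : (n:ℝ) ≤ z := Nat.floor_le (by linarith)
  have hzn : z < (n:ℝ) + 1 := Nat.lt_floor_add_one z
  set t : ℝ := z - n with htdef
  have ht0 : 0 ≤ t := by simp [htdef]; linarith
  have ht1 : t < 1 := by simp [htdef]; linarith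
  have hu : (0:ℝ) < 2 - t := by linarith
  have hfac1 : (0:ℝ) < (Nat.factorial (n+1) : ℝ) := by exact_mod_cast Nat.factorial_pos (n+1)
  have hfac2 : (0:ℝ) < (Nat.factorial (n+2) : ℝ) := by exact_mod_cast Nat.factorial_pos (n+2)
  have hΓpos : 0 < Real.Gamma (z+1) := Real.Gamma_pos_of_pos (by linarith)
  have hrp : (0:ℝ) < ((n:ℝ)+2) ^ (1-t) := Real.rpow_pos_of_pos (by linarith) _
  -- Gamma lower bound
  have hG : (Nat.factorial (n+1) : ℝ) / ((n:ℝ)+2) ^ (1-t) ≤ Real.Gamma (z + 1) := by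
    have hb0 : (0:ℝ) ≤ 1 - 1/(2-t) := by
      rw [sub_nonneg, div_le_one hu]; linarith
    have h := Gamma_interp (x := z+1) (y := (n:ℝ)+3) (a := 1/(2-t)) (b := 1 - 1/(2-t))
      (by linarith) (by linarith) (by positivity) hb0 (by ring)
    have harg : 1/(2-t) * (z+1) + (1 - 1/(2-t)) * ((n:ℝ)+3) = (n:ℝ) + 2 := by
      simp only [htdef]
      have hpos2 : (0:ℝ) < 2 - (z - ↑n) := by linarith
      field_simp [hpos2.ne']
      ring
    rw [harg] at h
    have e1 : Real.Gamma ((n:ℝ)+2) = (Nat.factorial (n+1) : ℝ) := by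
      have := Real.Gamma_nat_eq_factorial (n+1)
      push_cast at this ⊢
      rw [← this]; ring_nf
    have e2 : Real.Gamma ((n:ℝ)+3) = (Nat.factorial (n+2) : ℝ) := by
      have := Real.Gamma_nat_eq_factorial (n+2)
      push_cast at this ⊢
      rw [← this]; ring_nf
    rw [e1, e2] at h
    have h3 := Real.rpow_le_rpow (by positivity) h hu.le
    rw [Real.mul_rpow (by positivity) (by positivity), ← Real.rpow_mul hΓpos.le,
      ← Real.rpow_mul hfac2.le] at h3
    have ea : 1/(2-t) * (2-t) = 1 := one_div_mul_cancel hu.ne'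
    have eb : (1 - 1/(2-t)) * (2-t) = 1 - t := by
      rw [sub_mul, one_mul, one_div_mul_cancel hu.ne']; ring
    rw [ea, eb, Real.rpow_one] at h3
    have eA : (Nat.factorial (n+1) : ℝ) ^ (2-t) =
        (Nat.factorial (n+1) : ℝ) * (Nat.factorial (n+1) : ℝ) ^ (1-t) := by
      rw [show (2-t : ℝ) = 1 + (1-t) by ring, Real.rpow_add hfac1, Real.rpow_one]
    have eB : (Nat.factorial (n+2) : ℝ) ^ (1-t) =
        ((n:ℝ)+2) ^ (1-t) * (Nat.factorial (n+1) : ℝ) ^ (1-t) := by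
      have : (Nat.factorial (n+2) : ℝ) = ((n:ℝ)+2) * (Nat.factorial (n+1) : ℝ) := by
        push_cast [Nat.factorial_succ]; ring
      rw [this, Real.mul_rpow (by linarith) (by positivity)]
    rw [eA, eB, ← mul_assoc] at h3
    have hXpos : (0:ℝ) < (Nat.factorial (n+1) : ℝ) ^ (1-t) := Real.rpow_pos_of_pos hfac1 _
    rw [div_le_iff₀ hrp]
    nlinarith [mul_pos hΓpos hrp]
  -- numerator upper bound
  have hnum : Real.sqrt (2*Real.pi) * Real.exp (-z) * z ^ (z + 1/2) ≤
      Real.sqrt (2*Real.pi) * Real.exp (-((n:ℝ)+1)) * ((n:ℝ)+1) ^ (((n:ℝ)+1) + 1/2) *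
      (Real.exp (1-t) * ((n:ℝ)+1) ^ (t-1)) := by
    have h1 : z ^ (z + 1/2) ≤ ((n:ℝ)+1) ^ (z + 1/2) :=
      Real.rpow_le_rpow (by linarith) hzn.le (by linarith)
    have h2 : ((n:ℝ)+1) ^ (z + 1/2) = ((n:ℝ)+1) ^ (((n:ℝ)+1) + 1/2) * ((n:ℝ)+1) ^ (t-1) := by
      rw [← Real.rpow_add (by linarith)]; congr 1; simp [htdef]; ring
    have h3 : Real.exp (-z) = Real.exp (-((n:ℝ)+1)) * Real.exp (1-t) := by
      rw [← Real.exp_add]; congr 1; simp [htdef]; ring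
    calc Real.sqrt (2*Real.pi) * Real.exp (-z) * z ^ (z + 1/2)
        ≤ Real.sqrt (2*Real.pi) * Real.exp (-z) * ((n:ℝ)+1) ^ (z + 1/2) := by
          apply mul_le_mul_of_nonneg_left h1; positivity
      _ = Real.sqrt (2*Real.pi) * Real.exp (-((n:ℝ)+1)) * ((n:ℝ)+1) ^ (((n:ℝ)+1) + 1/2) *
          (Real.exp (1-t) * ((n:ℝ)+1) ^ (t-1)) := by
          rw [h3, h2]; ring
  -- combine
  have key : Rfun z ≤ Rfun ((n:ℝ)+1) * (Real.exp (1-t) * (((n:ℝ)+2)/((n:ℝ)+1)) ^ (1-t)) := by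
    have expand : Rfun ((n:ℝ)+1) * (Real.exp (1-t) * (((n:ℝ)+2)/((n:ℝ)+1)) ^ (1-t)) =
        (Real.sqrt (2*Real.pi) * Real.exp (-((n:ℝ)+1)) * ((n:ℝ)+1) ^ (((n:ℝ)+1) + 1/2) *
          (Real.exp (1-t) * ((n:ℝ)+1) ^ (t-1))) /
        ((Nat.factorial (n+1) : ℝ) / ((n:ℝ)+2) ^ (1-t)) := by
      unfold Rfun
      have eg : Real.Gamma (((n:ℝ)+1) + 1) = (Nat.factorial (n+1) : ℝ) := by
        have := Real.Gamma_nat_eq_factorial (n+1)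
        push_cast at this ⊢
        rw [← this]
      rw [eg, Real.div_rpow (by linarith) (by linarith),
        show (t - 1 : ℝ) = -(1-t) by ring, Real.rpow_neg (by linarith)]
      have hq : (0:ℝ) < ((n:ℝ)+1) ^ (1-t) := Real.rpow_pos_of_pos (by linarith) _
      field_simp
    rw [expand]
    unfold Rfun
    exact div_le_div₀ (by positivity) hnum (by positivity) hG
  refine key.trans ?_
  have hR1 : Rfun ((n:ℝ)+1) ≤ 1 := by
    have := Rfun_nat_le (n+1) (by omega)
    push_cast at this
    exact this
  have hE : Real.exp (1-t) ≤ Real.exp 1 := Real.exp_le_exp.mpr (by linarith)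
  have hP : (((n:ℝ)+2)/((n:ℝ)+1)) ^ (1-t) ≤ 3/2 := by
    have hb1 : (1:ℝ) ≤ ((n:ℝ)+2)/((n:ℝ)+1) := by
      rw [le_div_iff₀ (by linarith)]; linarith
    have hb2 : ((n:ℝ)+2)/((n:ℝ)+1) ≤ 3/2 := by
      rw [div_le_iff₀ (by linarith)]; linarith
    calc (((n:ℝ)+2)/((n:ℝ)+1)) ^ (1-t) ≤ (((n:ℝ)+2)/((n:ℝ)+1)) ^ (1:ℝ) :=
          Real.rpow_le_rpow_of_exponent_le hb1 (by linarith)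
      _ = ((n:ℝ)+2)/((n:ℝ)+1) := Real.rpow_one _
      _ ≤ 3/2 := hb2
  have hRpos : 0 < Rfun ((n:ℝ)+1) := Rfun_pos (by linarith)
  calc Rfun ((n:ℝ)+1) * (Real.exp (1-t) * (((n:ℝ)+2)/((n:ℝ)+1)) ^ (1-t))
      ≤ 1 * (Real.exp 1 * (3/2)) := by
        apply mul_le_mul hR1 _ (by positivity) zero_le_one
        apply mul_le_mul hE hP (by positivity) (Real.exp_pos _).le
    _ ≤ 2 * Real.exp 1 := by nlinarith [Real.exp_pos 1]

set_option maxHeartbeats 1000000 in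
/-- Eq. (3.8): there is `c > 0` depending only on `d` such that for all
`b ∈ (0,1)` and all `s ∈ S_d(b)`, `A_b(s) ≥ c b^{-d/2} / √((1-‖s‖₁) s_1 ⋯ s_d)`. -/
theorem Ab_lower_bound (d : ℕ) (hd : 1 ≤ d) :
    ∃ c : ℝ, 0 < c ∧ ∀ b ∈ Set.Ioo (0 : ℝ) 1, ∀ s ∈ SdB d b,
      c * b ^ (-(d : ℝ) / 2) / Real.sqrt ((1 - ∑ i, s i) * ∏ i, s i) ≤ varAb d b s := by
  obtain ⟨m, hmdef⟩ : ∃ m : ℝ, m = Real.sqrt (2 * Real.pi) / (2 * Real.exp 1 ^ 2) := ⟨_, rfl⟩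
  obtain ⟨M, hMdef⟩ : ∃ M : ℝ, M = 2 * Real.exp 1 := ⟨_, rfl⟩
  have hm : 0 < m := by rw [hmdef]; positivity
  have hM : 0 < M := by rw [hMdef]; positivity
  have hRge : ∀ z : ℝ, 1 ≤ z → m ≤ Rfun z := fun z hz => hmdef ▸ Rfun_ge hz
  have hRle : ∀ z : ℝ, 1 ≤ z → Rfun z ≤ M := fun z hz => hMdef ▸ Rfun_le hz
  refine ⟨Real.exp (-(d:ℝ)) * m ^ (2*d+3) / ((4*Real.pi) ^ ((d:ℝ)/2) * M ^ (d+3)),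
    div_pos (mul_pos (Real.exp_pos _) (pow_pos hm _))
      (mul_pos (Real.rpow_pos_of_pos (by positivity) _) (pow_pos hM _)), ?_⟩
  rintro b ⟨hb0, hb1⟩ s ⟨hsSd, hby, hbsi⟩
  have hd0 : (0:ℝ) ≤ (d:ℝ) := Nat.cast_nonneg d
  set y : ℝ := 1 - ∑ i, s i with hydef
  have hy0 : 0 < y := lt_of_lt_of_le hb0 hby
  have hsi0 : ∀ i, 0 < s i := fun i => lt_of_lt_of_le hb0 (hbsi i)
  have hP : 0 < y * ∏ i, s i :=
    mul_pos hy0 (Finset.prod_pos fun i _ => hsi0 i)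
  set Q : ℝ := Real.sqrt (y * ∏ i, s i) with hQdef
  have hQ : 0 < Q := Real.sqrt_pos.mpr hP
  -- argument bounds
  have hyb : 1 ≤ y / b := (one_le_div hb0).mpr hby
  have hsb : ∀ i, 1 ≤ s i / b := fun i => (one_le_div hb0).mpr (hbsi i)
  have h2yb : 1 ≤ 2 * y / b := (one_le_div hb0).mpr (by linarith)
  have h2sb : ∀ i, 1 ≤ 2 * s i / b := fun i => (one_le_div hb0).mpr (by
    have := hbsi i; linarith)
  have h1b : 1 ≤ 1 / b := by rw [le_div_iff₀ hb0]; linarith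
  have h2b : 2 ≤ 2 / b := by rw [le_div_iff₀ hb0]; linarith
  have h1bd : 1 ≤ 1 / b + (d:ℝ) := by linarith
  have h2bd : 1 ≤ 2 / b + (d:ℝ) := by linarith
  -- T1 bound
  have hD : 0 < (4*Real.pi) ^ ((d:ℝ)/2) * Q :=
    mul_pos (Real.rpow_pos_of_pos (by positivity) _) hQ
  have hT1num : b ^ (-(d:ℝ)/2) ≤ b ^ (((d:ℝ)+1)/2) * (1/b + (d:ℝ)) ^ ((d:ℝ) + 1/2) := by
    have e1 : (1/b : ℝ) ^ ((d:ℝ)+1/2) ≤ (1/b + (d:ℝ)) ^ ((d:ℝ)+1/2) :=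
      Real.rpow_le_rpow (by positivity) (by linarith) (by linarith)
    have e2 : b ^ (((d:ℝ)+1)/2) * (1/b : ℝ) ^ ((d:ℝ)+1/2) = b ^ (-(d:ℝ)/2) := by
      rw [one_div, Real.inv_rpow hb0.le, ← Real.rpow_neg hb0.le, ← Real.rpow_add hb0]
      congr 1; ring
    calc b ^ (-(d:ℝ)/2) = b ^ (((d:ℝ)+1)/2) * (1/b : ℝ) ^ ((d:ℝ)+1/2) := e2.symm
      _ ≤ b ^ (((d:ℝ)+1)/2) * (1/b + (d:ℝ)) ^ ((d:ℝ)+1/2) :=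
          mul_le_mul_of_nonneg_left e1 (Real.rpow_nonneg hb0.le _)
  have hT1 : b ^ (-(d:ℝ)/2) / ((4*Real.pi) ^ ((d:ℝ)/2) * Q) ≤
      b ^ (((d:ℝ)+1)/2) * (1/b + (d:ℝ)) ^ ((d:ℝ) + 1/2) / ((4*Real.pi) ^ ((d:ℝ)/2) * Q) :=
    (div_le_div_iff_of_pos_right hD).mpr hT1num
  have hT1pos : 0 < b ^ (((d:ℝ)+1)/2) * (1/b + (d:ℝ)) ^ ((d:ℝ) + 1/2) /
      ((4*Real.pi) ^ ((d:ℝ)/2) * Q) :=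
    div_pos (mul_pos (Real.rpow_pos_of_pos hb0 _)
      (Real.rpow_pos_of_pos (by linarith) _)) hD
  -- T2 bound
  have hbase : 1 ≤ (2/b + 2*(d:ℝ)) / (2/b + (d:ℝ)) := by
    rw [le_div_iff₀ (by linarith)]; linarith
  have hT2 : 1 ≤ ((2/b + 2*(d:ℝ)) / (2/b + (d:ℝ))) ^ (2/b + (d:ℝ) + 1/2) := by
    calc (1:ℝ) = ((2/b + 2*(d:ℝ)) / (2/b + (d:ℝ))) ^ (0:ℝ) := (Real.rpow_zero _).symm
      _ ≤ ((2/b + 2*(d:ℝ)) / (2/b + (d:ℝ))) ^ (2/b + (d:ℝ) + 1/2) :=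
          Real.rpow_le_rpow_of_exponent_le hbase (by linarith)
  -- Rfun bounds for the arguments
  -- T4 bound
  have hT4num : m^2 * m^(2*d) ≤ Rfun (y/b) ^ 2 * ∏ i, Rfun (s i / b) ^ 2 := by
    apply mul_le_mul
    · exact pow_le_pow_left₀ hm.le (hRge _ hyb) 2
    · calc m^(2*d) = ∏ _i : Fin d, m^2 := by
            rw [Finset.prod_const, Finset.card_univ, Fintype.card_fin, ← pow_mul]
        _ ≤ ∏ i, Rfun (s i / b) ^ 2 := Finset.prod_le_prod
            (fun i _ => sq_nonneg m)
            (fun i _ => pow_le_pow_left₀ hm.le (hRge _ (hsb i)) 2)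
    · exact pow_nonneg hm.le _
    · exact sq_nonneg _
  have hT4den : Rfun (2*y/b) * ∏ i, Rfun (2 * s i / b) ≤ M * M^d := by
    apply mul_le_mul (hRle _ h2yb)
    · calc (∏ i, Rfun (2 * s i / b)) ≤ ∏ _i : Fin d, M := Finset.prod_le_prod
            (fun i _ => (Rfun_pos (by linarith [h2sb i])).le)
            (fun i _ => hRle _ (h2sb i))
        _ = M^d := by rw [Finset.prod_const, Finset.card_univ, Fintype.card_fin]
    · exact Finset.prod_nonneg fun i _ => (Rfun_pos (by linarith [h2sb i])).le
    · exact hM.le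
  have hT4denpos : 0 < Rfun (2*y/b) * ∏ i, Rfun (2 * s i / b) :=
    mul_pos (Rfun_pos (by linarith)) (Finset.prod_pos fun i _ => Rfun_pos (by linarith [h2sb i]))
  have hT4 : m^2 * m^(2*d) / (M * M^d) ≤
      Rfun (y/b) ^ 2 * (∏ i, Rfun (s i / b) ^ 2) / (Rfun (2*y/b) * ∏ i, Rfun (2 * s i / b)) :=
    div_le_div₀ (by positivity) hT4num hT4denpos hT4den
  have hT4lbnn : (0:ℝ) ≤ m^2 * m^(2*d) / (M * M^d) :=
    div_nonneg (mul_nonneg (sq_nonneg m) (pow_nonneg hm.le _)) (mul_nonneg hM.le (pow_nonneg hM.le _))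
  have hT4nn : (0:ℝ) ≤
      Rfun (y/b) ^ 2 * (∏ i, Rfun (s i / b) ^ 2) / (Rfun (2*y/b) * ∏ i, Rfun (2 * s i / b)) :=
    le_trans hT4lbnn hT4
  -- T5 bound
  have hT5 : m / M^2 ≤ Rfun (2/b + (d:ℝ)) / Rfun (1/b + (d:ℝ)) ^ 2 := by
    apply div_le_div₀ (Rfun_pos (by linarith)).le (hRge _ h2bd)
    · exact pow_pos (Rfun_pos (by linarith)) 2
    · exact pow_le_pow_left₀ (Rfun_pos (by linarith)).le (hRle _ h1bd) 2
  -- assemble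
  have hfinal :
      (b ^ (-(d:ℝ)/2) / ((4*Real.pi) ^ ((d:ℝ)/2) * Q)) * 1 * Real.exp (-(d:ℝ)) *
        (m^2 * m^(2*d) / (M * M^d)) * (m / M^2) ≤ varAb d b s := by
    unfold varAb
    rw [← hydef, ← hQdef]
    have s1 := mul_le_mul hT1 hT2 zero_le_one hT1pos.le
    have s1nn : (0:ℝ) ≤ b ^ (((d:ℝ)+1)/2) * (1/b + (d:ℝ)) ^ ((d:ℝ) + 1/2) /
        ((4*Real.pi) ^ ((d:ℝ)/2) * Q) * ((2/b + 2*(d:ℝ)) / (2/b + (d:ℝ))) ^ (2/b + (d:ℝ) + 1/2) :=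
      mul_nonneg hT1pos.le (le_trans zero_le_one hT2)
    have s2 := mul_le_mul s1 (le_refl (Real.exp (-(d:ℝ)))) (Real.exp_pos _).le s1nn
    have s2nn := mul_nonneg s1nn (Real.exp_pos (-(d:ℝ))).le
    have s3 := mul_le_mul s2 hT4 hT4lbnn s2nn
    have s3nn := mul_nonneg s2nn hT4nn
    exact mul_le_mul s3 hT5 (div_nonneg hm.le (sq_nonneg M)) s3nn
  refine le_trans (le_of_eq ?_) hfinal
  have hMne : M ≠ 0 := hM.ne'
  have hQne : Q ≠ 0 := hQ.ne'
  have hDne : ((4*Real.pi) ^ ((d:ℝ)/2) : ℝ) ≠ 0 := (Real.rpow_pos_of_pos (by positivity) _).ne'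
  field_simp
  ring
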